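/- Let f : ℝ² → ℝ be three times continuously differentiable with ‖D³f(x)‖ ≤ C₃ for all x ∈ ℝ². Then for every point p ∈ ℝ², every step size h > 0, and every translation vector w ∈ ℝ², the five-point cross difference is stable under translation: |(Σ_{e∈{±e₁,±e₂}} f(p + w + h e) − 4f(p + w)) − (Σ_{e∈{±e₁,±e₂}} f(p + h e) − 4f(p))| ≤ 2·C₃·h²·‖w‖. -/

import Mathlib

open Set

variable {E : Type*} [NormedAddCommGroup E] [NormedSpace ℝ E]

private lemma evalDeriv (f : E → ℝ) {n : ℕ} (hf : ContDiff ℝ (n+1 : ℕ) f)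
    (m : Fin n → E) (x u : E) (s : ℝ) :
    HasDerivAt (fun s : ℝ => iteratedFDeriv ℝ n f (x + s • u) m)
      (iteratedFDeriv ℝ (n+1) f (x + s • u) (Fin.cons u m)) s := by
  have hdiff : Differentiable ℝ (iteratedFDeriv ℝ n f) := by
    have : ContDiff ℝ 1 (iteratedFDeriv ℝ n f) :=
      hf.iteratedFDeriv_right (by exact_mod_cast Nat.le_of_eq (Nat.add_comm 1 n))
    exact this.differentiable one_ne_zero
  have hline : HasDerivAt (fun s : ℝ => x + s • u) u s := by
    simpa using ((hasDerivAt_id s).smul_const u).const_add x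
  have h1 : HasFDerivAt (iteratedFDeriv ℝ n f)
      (fderiv ℝ (iteratedFDeriv ℝ n f) (x + s • u)) (x + s • u) :=
    (hdiff _).hasFDerivAt
  have h2 := ((ContinuousMultilinearMap.apply ℝ (fun _ : Fin n => E) ℝ m).hasFDerivAt.comp
      (x + s • u) h1).comp_hasDerivAt s hline
  exact h2

private lemma diff2_lip (f : E → ℝ) (C₃ : ℝ) (hf : ContDiff ℝ 3 f)
    (hbound : ∀ x, ‖iteratedFDeriv ℝ 3 f x‖ ≤ C₃) (a b v w : E) :
    |iteratedFDeriv ℝ 2 f a ![v, w] - iteratedFDeriv ℝ 2 f b ![v, w]|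
      ≤ C₃ * ‖a - b‖ * ‖v‖ * ‖w‖ := by
  have hf3 : ContDiff ℝ (2+1 : ℕ) f := by exact_mod_cast hf
  have key : ∀ t ∈ Icc (0:ℝ) 1,
      HasDerivWithinAt (fun t : ℝ => iteratedFDeriv ℝ 2 f (b + t • (a-b)) ![v,w])
        (iteratedFDeriv ℝ 3 f (b + t • (a-b)) ![a-b, v, w]) (Icc (0:ℝ) 1) t := by
    intro t _
    exact (evalDeriv f hf3 ![v,w] b (a-b) t).hasDerivWithinAt
  have bound : ∀ t ∈ Ico (0:ℝ) 1,
      ‖iteratedFDeriv ℝ 3 f (b + t • (a-b)) ![a-b, v, w]‖ ≤ C₃ * ‖a - b‖ * ‖v‖ * ‖w‖ := by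
    intro t _
    have h1 := (iteratedFDeriv ℝ 3 f (b + t • (a-b))).le_opNorm ![a-b, v, w]
    simp only [Fin.prod_univ_succ, Fin.prod_univ_zero, Matrix.cons_val_zero,
      Matrix.cons_val_succ, mul_one] at h1
    calc ‖iteratedFDeriv ℝ 3 f (b + t • (a-b)) ![a-b, v, w]‖
        ≤ ‖iteratedFDeriv ℝ 3 f (b + t • (a-b))‖ * (‖a-b‖ * (‖v‖ * ‖w‖)) := h1
      _ ≤ C₃ * (‖a-b‖ * (‖v‖ * ‖w‖)) := by
          apply mul_le_mul_of_nonneg_right (hbound _)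
          positivity
      _ = C₃ * ‖a - b‖ * ‖v‖ * ‖w‖ := by ring
  have := norm_image_sub_le_of_norm_deriv_le_segment_01' key bound
  simpa using this

private lemma second_diff (f : E → ℝ) (C₃ : ℝ) (hf : ContDiff ℝ 3 f)
    (hbound : ∀ x, ‖iteratedFDeriv ℝ 3 f x‖ ≤ C₃) (x v w : E) :
    |iteratedFDeriv ℝ 1 f (x+v) ![w] + iteratedFDeriv ℝ 1 f (x-v) ![w]
      - 2 * iteratedFDeriv ℝ 1 f x ![w]| ≤ C₃ * ‖v‖ * ‖v‖ * ‖w‖ := by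
  have hf2 : ContDiff ℝ (1+1 : ℕ) f := hf.of_le (by norm_cast)
  set G : ℝ → ℝ := fun t =>
    iteratedFDeriv ℝ 1 f (x + t • v) ![w] - iteratedFDeriv ℝ 1 f ((x - v) + t • v) ![w] with hG
  have key : ∀ t ∈ Icc (0:ℝ) 1,
      HasDerivWithinAt G
        (iteratedFDeriv ℝ 2 f (x + t • v) ![v, w]
          - iteratedFDeriv ℝ 2 f ((x - v) + t • v) ![v, w]) (Icc (0:ℝ) 1) t := by
    intro t _
    exact ((evalDeriv f hf2 ![w] x v t).sub (evalDeriv f hf2 ![w] (x-v) v t)).hasDerivWithinAt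
  have bound : ∀ t ∈ Ico (0:ℝ) 1,
      ‖iteratedFDeriv ℝ 2 f (x + t • v) ![v, w]
        - iteratedFDeriv ℝ 2 f ((x - v) + t • v) ![v, w]‖ ≤ C₃ * ‖v‖ * ‖v‖ * ‖w‖ := by
    intro t _
    have h1 := diff2_lip f C₃ hf hbound (x + t • v) ((x - v) + t • v) v w
    have h2 : (x + t • v) - ((x - v) + t • v) = v := by abel
    rw [h2] at h1
    simpa using h1
  have := norm_image_sub_le_of_norm_deriv_le_segment_01' key bound
  have hG1 : G 1 = iteratedFDeriv ℝ 1 f (x+v) ![w] - iteratedFDeriv ℝ 1 f x ![w] := by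
    simp [hG]
  have hG0 : G 0 = iteratedFDeriv ℝ 1 f x ![w] - iteratedFDeriv ℝ 1 f (x-v) ![w] := by
    simp [hG]
  rw [hG1, hG0] at this
  rw [Real.norm_eq_abs] at this
  calc |iteratedFDeriv ℝ 1 f (x+v) ![w] + iteratedFDeriv ℝ 1 f (x-v) ![w]
      - 2 * iteratedFDeriv ℝ 1 f x ![w]|
      = |(iteratedFDeriv ℝ 1 f (x+v) ![w] - iteratedFDeriv ℝ 1 f x ![w])
        - (iteratedFDeriv ℝ 1 f x ![w] - iteratedFDeriv ℝ 1 f (x-v) ![w])| := by ring_nf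
    _ ≤ C₃ * ‖v‖ * ‖v‖ * ‖w‖ := this


private lemma one_dir (f : E → ℝ) (C₃ : ℝ) (hf : ContDiff ℝ 3 f)
    (hbound : ∀ x, ‖iteratedFDeriv ℝ 3 f x‖ ≤ C₃) (p v w : E) :
    |(f (p+w+v) + f (p+w-v) - 2 * f (p+w)) - (f (p+v) + f (p-v) - 2 * f p)|
      ≤ C₃ * ‖v‖ * ‖v‖ * ‖w‖ := by
  have hf1 : ContDiff ℝ (0+1 : ℕ) f := hf.of_le (by norm_cast)
  have e0 : ∀ (x : E) (s : ℝ), HasDerivAt (fun s : ℝ => f (x + s • w))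
      (iteratedFDeriv ℝ 1 f (x + s • w) ![w]) s := by
    intro x s
    have h := evalDeriv f hf1 ![] x w s
    simp only [iteratedFDeriv_zero_apply] at h
    exact h
  set F : ℝ → ℝ := fun s => f (p + v + s • w) + f (p - v + s • w) - 2 * f (p + s • w) with hF
  have key : ∀ s ∈ Icc (0:ℝ) 1,
      HasDerivWithinAt F
        (iteratedFDeriv ℝ 1 f (p + v + s • w) ![w] + iteratedFDeriv ℝ 1 f (p - v + s • w) ![w]
          - 2 * iteratedFDeriv ℝ 1 f (p + s • w) ![w]) (Icc (0:ℝ) 1) s := by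
    intro s _
    exact (((e0 (p+v) s).add (e0 (p-v) s)).sub ((e0 p s).const_mul 2)).hasDerivWithinAt
  have bound : ∀ s ∈ Ico (0:ℝ) 1,
      ‖iteratedFDeriv ℝ 1 f (p + v + s • w) ![w] + iteratedFDeriv ℝ 1 f (p - v + s • w) ![w]
        - 2 * iteratedFDeriv ℝ 1 f (p + s • w) ![w]‖ ≤ C₃ * ‖v‖ * ‖v‖ * ‖w‖ := by
    intro s _
    have h1 := second_diff f C₃ hf hbound (p + s • w) v w
    have e1 : p + s • w + v = p + v + s • w := by abel
    have e2 : p + s • w - v = p - v + s • w := by abel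
    rw [e1, e2] at h1
    simpa using h1
  have hmvt := norm_image_sub_le_of_norm_deriv_le_segment_01' key bound
  have hF1 : F 1 = f (p+w+v) + f (p+w-v) - 2 * f (p+w) := by
    have a1 : p + v + (1:ℝ) • w = p + w + v := by rw [one_smul]; abel
    have a2 : p - v + (1:ℝ) • w = p + w - v := by rw [one_smul]; abel
    have a3 : p + (1:ℝ) • w = p + w := by rw [one_smul]
    simp only [hF, a1, a2, a3]
  have hF0 : F 0 = f (p+v) + f (p-v) - 2 * f p := by
    simp [hF]
  rw [hF1, hF0, Real.norm_eq_abs] at hmvt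
  exact hmvt

open EuclideanSpace in
/-- For a three times continuously differentiable image signal `f : ℝ² → ℝ` with
uniformly bounded third derivative, the five-point cross difference is stable under
translation by a vector `w`: the gap is at most `2 C₃ h² ‖w‖`. -/
theorem five_point_cross_translation_stability
    (f : EuclideanSpace ℝ (Fin 2) → ℝ) (C₃ : ℝ)
    (hf : ContDiff ℝ 3 f)
    (hbound : ∀ x, ‖iteratedFDeriv ℝ 3 f x‖ ≤ C₃)
    (p : EuclideanSpace ℝ (Fin 2)) (h : ℝ) (hh : 0 < h)
    (w : EuclideanSpace ℝ (Fin 2)) :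
    |(f (p + w + h • single (0 : Fin 2) (1 : ℝ)) + f (p + w - h • single (0 : Fin 2) (1 : ℝ))
        + f (p + w + h • single (1 : Fin 2) (1 : ℝ)) + f (p + w - h • single (1 : Fin 2) (1 : ℝ))
        - 4 * f (p + w))
      - (f (p + h • single (0 : Fin 2) (1 : ℝ)) + f (p - h • single (0 : Fin 2) (1 : ℝ))
        + f (p + h • single (1 : Fin 2) (1 : ℝ)) + f (p - h • single (1 : Fin 2) (1 : ℝ))
        - 4 * f p)|
      ≤ 2 * C₃ * h ^ 2 * ‖w‖ := by
  set v₀ : EuclideanSpace ℝ (Fin 2) := h • single (0 : Fin 2) (1 : ℝ) with hv₀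
  set v₁ : EuclideanSpace ℝ (Fin 2) := h • single (1 : Fin 2) (1 : ℝ) with hv₁
  have hn0 : ‖v₀‖ = h := by
    rw [hv₀, norm_smul, EuclideanSpace.norm_single]
    simp [abs_of_pos hh]
  have hn1 : ‖v₁‖ = h := by
    rw [hv₁, norm_smul, EuclideanSpace.norm_single]
    simp [abs_of_pos hh]
  have hX := one_dir f C₃ hf hbound p v₀ w
  have hY := one_dir f C₃ hf hbound p v₁ w
  rw [hn0] at hX
  rw [hn1] at hY
  calc |(f (p + w + v₀) + f (p + w - v₀) + f (p + w + v₁) + f (p + w - v₁) - 4 * f (p + w))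
      - (f (p + v₀) + f (p - v₀) + f (p + v₁) + f (p - v₁) - 4 * f p)|
      = |((f (p+w+v₀) + f (p+w-v₀) - 2 * f (p+w)) - (f (p+v₀) + f (p-v₀) - 2 * f p))
        + ((f (p+w+v₁) + f (p+w-v₁) - 2 * f (p+w)) - (f (p+v₁) + f (p-v₁) - 2 * f p))| := by
        ring_nf
    _ ≤ |(f (p+w+v₀) + f (p+w-v₀) - 2 * f (p+w)) - (f (p+v₀) + f (p-v₀) - 2 * f p)|
        + |(f (p+w+v₁) + f (p+w-v₁) - 2 * f (p+w)) - (f (p+v₁) + f (p-v₁) - 2 * f p)| :=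
        abs_add_le _ _
    _ ≤ C₃ * h * h * ‖w‖ + C₃ * h * h * ‖w‖ := add_le_add hX hY
    _ = 2 * C₃ * h ^ 2 * ‖w‖ := by ring
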